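/- Consider ẋ = (J-R)x + H(x⊗x) + Bu with J skew-symmetric, R symmetric positive definite, H energy-preserving, u essentially bounded, and let r = ‖B‖₂‖u‖_{L∞}/σ_min(R). If ‖x(0)‖₂ > r then ‖x(t)‖₂ is strictly decreasing as long as ‖x(t)‖₂ > r; in particular the closed ball of radius max{‖x(0)‖₂, r} centered at the origin is forward invariant for the trajectory. -/

import Mathlib

open Matrix

/-- The Euclidean 2-norm of a vector in `ℝⁿ`. -/
noncomputable def norm2 {n : ℕ} (v : Fin n → ℝ) : ℝ := Real.sqrt (v ⬝ᵥ v)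

/-- The Kronecker product of two vectors, `(z ⊗ w)_{(j,k)} = z_j w_k`. -/
def kron {n : ℕ} (z w : Fin n → ℝ) : Fin n × Fin n → ℝ := fun p => z p.1 * w p.2

/-- The spectral norm (L2 operator norm) of a real matrix. -/
noncomputable def specNorm {n m : ℕ} (B : Matrix (Fin n) (Fin m) ℝ) : ℝ :=
  sSup {c | ∃ v : Fin m → ℝ, norm2 v ≤ 1 ∧ c = norm2 (B.mulVec v)}

/-- The smallest eigenvalue of a Hermitian real matrix. -/
noncomputable def sigmaMin {n : ℕ} (R : Matrix (Fin n) (Fin n) ℝ)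
    (hR : R.IsHermitian) : ℝ := ⨅ i, hR.eigenvalues i

lemma dot_self_nonneg {n : ℕ} (v : Fin n → ℝ) : 0 ≤ v ⬝ᵥ v :=
  Finset.sum_nonneg fun i _ => mul_self_nonneg (v i)

lemma norm2_nonneg {n : ℕ} (v : Fin n → ℝ) : 0 ≤ norm2 v := Real.sqrt_nonneg _

lemma sq_norm2 {n : ℕ} (v : Fin n → ℝ) : norm2 v ^ 2 = v ⬝ᵥ v := by
  rw [norm2, Real.sq_sqrt (dot_self_nonneg v)]

lemma norm2_smul {n : ℕ} (a : ℝ) (v : Fin n → ℝ) : norm2 (a • v) = |a| * norm2 v := by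
  unfold norm2
  rw [smul_dotProduct, dotProduct_smul, smul_smul, smul_eq_mul,
    Real.sqrt_mul (mul_self_nonneg a), Real.sqrt_mul_self_eq_abs]

lemma cauchy_dot {n : ℕ} (v w : Fin n → ℝ) : v ⬝ᵥ w ≤ norm2 v * norm2 w := by
  have h := Finset.sum_mul_sq_le_sq_mul_sq Finset.univ v w
  have h2 : (v ⬝ᵥ w) ^ 2 ≤ (v ⬝ᵥ v) * (w ⬝ᵥ w) := by
    simpa [dotProduct, pow_two] using h
  calc v ⬝ᵥ w ≤ |v ⬝ᵥ w| := le_abs_self _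
    _ = Real.sqrt ((v ⬝ᵥ w) ^ 2) := (Real.sqrt_sq_eq_abs _).symm
    _ ≤ Real.sqrt ((v ⬝ᵥ v) * (w ⬝ᵥ w)) := Real.sqrt_le_sqrt h2
    _ = norm2 v * norm2 w := Real.sqrt_mul (dot_self_nonneg v) _

noncomputable def frobNorm {n m : ℕ} (B : Matrix (Fin n) (Fin m) ℝ) : ℝ :=
  Real.sqrt (∑ i, ∑ j, (B i j) ^ 2)

lemma frobNorm_nonneg {n m : ℕ} (B : Matrix (Fin n) (Fin m) ℝ) : 0 ≤ frobNorm B :=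
  Real.sqrt_nonneg _

lemma frob_bound {n m : ℕ} (B : Matrix (Fin n) (Fin m) ℝ) (w : Fin m → ℝ) :
    norm2 (B.mulVec w) ≤ frobNorm B * norm2 w := by
  have key : (B.mulVec w) ⬝ᵥ (B.mulVec w) ≤ (∑ i, ∑ j, (B i j) ^ 2) * (w ⬝ᵥ w) := by
    unfold dotProduct mulVec
    calc ∑ i, (∑ j, B i j * w j) * (∑ j, B i j * w j)
        ≤ ∑ i, (∑ j, (B i j) ^ 2) * (∑ j, (w j) ^ 2) := by
          refine Finset.sum_le_sum fun i _ => ?_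
          have := Finset.sum_mul_sq_le_sq_mul_sq Finset.univ (B i) w
          simpa [pow_two, dotProduct] using this
      _ = (∑ i, ∑ j, (B i j) ^ 2) * (∑ j, w j * w j) := by
          rw [Finset.sum_mul]
          exact Finset.sum_congr rfl fun i _ => by
            congr 1; exact Finset.sum_congr rfl fun j _ => (pow_two (w j))
  have := Real.sqrt_le_sqrt key
  rwa [Real.sqrt_mul (x := ∑ i, ∑ j, (B i j) ^ 2) (Finset.sum_nonneg fun i _ => Finset.sum_nonneg fun j _ => sq_nonneg _)]
    at this

lemma specSet_bddAbove {n m : ℕ} (B : Matrix (Fin n) (Fin m) ℝ) :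
    BddAbove {c | ∃ v : Fin m → ℝ, norm2 v ≤ 1 ∧ c = norm2 (B.mulVec v)} := by
  refine ⟨frobNorm B, fun c hc => ?_⟩
  obtain ⟨v, hv, rfl⟩ := hc
  calc norm2 (B.mulVec v) ≤ frobNorm B * norm2 v := frob_bound B v
    _ ≤ frobNorm B * 1 := mul_le_mul_of_nonneg_left hv (frobNorm_nonneg B)
    _ = frobNorm B := mul_one _

lemma norm2_zero {k : ℕ} : norm2 (0 : Fin k → ℝ) = 0 := by
  simp [norm2, dotProduct]

lemma specNorm_nonneg {n m : ℕ} (B : Matrix (Fin n) (Fin m) ℝ) : 0 ≤ specNorm B := by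
  have h0 : (0 : ℝ) ∈ {c | ∃ v : Fin m → ℝ, norm2 v ≤ 1 ∧ c = norm2 (B.mulVec v)} :=
    ⟨0, by simp [norm2_zero], by simp [Matrix.mulVec_zero, norm2_zero]⟩
  exact le_csSup (specSet_bddAbove B) h0

lemma specNorm_bound {n m : ℕ} (B : Matrix (Fin n) (Fin m) ℝ) (v : Fin m → ℝ) :
    norm2 (B.mulVec v) ≤ specNorm B * norm2 v := by
  rcases eq_or_lt_of_le (norm2_nonneg v) with h0 | h0
  · have hvv : v ⬝ᵥ v = 0 := by
      have := sq_norm2 v; rw [← h0] at this; simpa using this.symm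
    have hv0 : v = 0 := by
      funext i
      simp only [Pi.zero_apply]
      have := (Finset.sum_eq_zero_iff_of_nonneg
        (fun j (_ : j ∈ Finset.univ) => mul_self_nonneg (v j))).mp hvv i (Finset.mem_univ i)
      nlinarith [this]
    rw [hv0]
    simp [Matrix.mulVec_zero, norm2_zero]
  · set c := norm2 v with hc
    have hmem : norm2 (B.mulVec (c⁻¹ • v)) ∈
        {d | ∃ w : Fin m → ℝ, norm2 w ≤ 1 ∧ d = norm2 (B.mulVec w)} := by
      refine ⟨c⁻¹ • v, ?_, rfl⟩
      rw [norm2_smul, abs_of_nonneg (inv_nonneg.mpr h0.le), ← hc, inv_mul_cancel₀ h0.ne']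
    have hle := le_csSup (specSet_bddAbove B) hmem
    rw [Matrix.mulVec_smul, norm2_smul, abs_of_nonneg (inv_nonneg.mpr h0.le)] at hle
    have := mul_le_mul_of_nonneg_left hle h0.le
    rw [← mul_assoc, mul_inv_cancel₀ h0.ne', one_mul] at this
    calc norm2 (B.mulVec v) = c * (c⁻¹ * norm2 (B.mulVec v)) := by
          rw [← mul_assoc, mul_inv_cancel₀ h0.ne', one_mul]
      _ ≤ c * specNorm B := mul_le_mul_of_nonneg_left hle h0.le
      _ = specNorm B * c := mul_comm _ _

lemma sigmaMin_le {n : ℕ} (R : Matrix (Fin n) (Fin n) ℝ) (hR : R.IsHermitian) (i : Fin n) :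
    sigmaMin R hR ≤ hR.eigenvalues i :=
  ciInf_le (Finite.bddBelow_range _) i

lemma sigmaMin_pos {n : ℕ} (hn : 0 < n) (R : Matrix (Fin n) (Fin n) ℝ) (hR : R.PosDef) :
    0 < sigmaMin R hR.1 := by
  haveI : Nonempty (Fin n) := ⟨⟨0, hn⟩⟩
  obtain ⟨i, hi⟩ := Finite.exists_min hR.1.eigenvalues
  exact lt_of_lt_of_le (hR.eigenvalues_pos i) (le_ciInf hi)

lemma quad_lower {n : ℕ} (R : Matrix (Fin n) (Fin n) ℝ) (hR : R.IsHermitian)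
    (v : Fin n → ℝ) : sigmaMin R hR * (v ⬝ᵥ v) ≤ v ⬝ᵥ R.mulVec v := by
  classical
  set V : Matrix (Fin n) (Fin n) ℝ :=
    (Matrix.IsHermitian.eigenvectorUnitary hR : Matrix (Fin n) (Fin n) ℝ) with hV
  set w : Fin n → ℝ := (star V).mulVec v with hw
  have hstar : star V = Vᵀ := by
    ext i j; simp [Matrix.star_eq_conjTranspose, Matrix.conjTranspose_apply]
  have hunit : V * star V = 1 := by
    have := (Matrix.IsHermitian.eigenvectorUnitary hR).2
    rw [Matrix.mem_unitaryGroup_iff] at this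
    exact this
  have hww : w ⬝ᵥ w = v ⬝ᵥ v := by
    calc w ⬝ᵥ w = (w ᵥ* (star V)) ⬝ᵥ v := by rw [← dotProduct_mulVec]
      _ = (V *ᵥ w) ⬝ᵥ v := by rw [hstar, ← Matrix.vecMul_transpose]
      _ = ((V * star V) *ᵥ v) ⬝ᵥ v := by rw [hw, Matrix.mulVec_mulVec]
      _ = v ⬝ᵥ v := by rw [hunit, Matrix.one_mulVec]
  have hquad : v ⬝ᵥ R.mulVec v = ∑ i, hR.eigenvalues i * (w i * w i) := by
    conv_lhs => rw [hR.spectral_theorem, Unitary.conjStarAlgAut_apply]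
    rw [← Matrix.mulVec_mulVec, ← Matrix.mulVec_mulVec, Matrix.dotProduct_mulVec]
    have h1 : v ᵥ* (hR.eigenvectorUnitary : Matrix (Fin n) (Fin n) ℝ) = w := by
      rw [hw, hstar, ← Matrix.vecMul_transpose, Matrix.transpose_transpose]
    rw [h1, ← hw]
    simp [Matrix.mulVec_diagonal, dotProduct, Finset.mul_sum]
    exact Finset.sum_congr rfl fun i _ => by ring
  rw [hquad, ← hww, dotProduct, Finset.mul_sum]
  exact Finset.sum_le_sum fun i _ =>
    mul_le_mul_of_nonneg_right (sigmaMin_le R hR i) (mul_self_nonneg (w i))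

lemma skew_dot {n : ℕ} (J : Matrix (Fin n) (Fin n) ℝ) (hJ : Jᵀ = -J) (v : Fin n → ℝ) :
    v ⬝ᵥ J.mulVec v = 0 := by
  have h : v ⬝ᵥ J.mulVec v = (Jᵀ.mulVec v) ⬝ᵥ v := by
    rw [Matrix.dotProduct_mulVec, ← Matrix.vecMul_transpose, Matrix.transpose_transpose]
  rw [hJ, Matrix.neg_mulVec, neg_dotProduct] at h
  rw [dotProduct_comm] at h ⊢
  linarith

/-- For `ẋ = (J-R)x + H(x⊗x) + Bu` with `J` skew-symmetric, `R` symmetric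
positive definite, `H` energy-preserving and bounded input, setting
`r = ‖B‖₂ U / σ_min(R)`: the state norm strictly decreases as long as it
exceeds `r`, and the closed ball of radius `max {‖x(0)‖₂, r}` is forward
invariant for the trajectory. -/
theorem stmt_16 {n m : ℕ} (J R : Matrix (Fin n) (Fin n) ℝ)
    (B : Matrix (Fin n) (Fin m) ℝ)
    (H : Matrix (Fin n) (Fin n × Fin n) ℝ)
    (hJ : Jᵀ = -J) (hR : R.PosDef)
    (hEP : ∀ z : Fin n → ℝ, z ⬝ᵥ H.mulVec (kron z z) = 0)
    (u : ℝ → Fin m → ℝ) (U : ℝ) (hU : ∀ t : ℝ, norm2 (u t) ≤ U)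
    (x : ℝ → Fin n → ℝ)
    (hx : ∀ t : ℝ, HasDerivAt x
      ((J - R).mulVec (x t) + H.mulVec (kron (x t) (x t)) + B.mulVec (u t)) t) :
    (∀ t₀ t₁ : ℝ, 0 ≤ t₀ → t₀ < t₁ →
      (∀ s ∈ Set.Icc t₀ t₁,
        specNorm B * U / sigmaMin R hR.1 < norm2 (x s)) →
      norm2 (x t₁) < norm2 (x t₀)) ∧
    (∀ t : ℝ, 0 ≤ t →
      norm2 (x t) ≤ max (norm2 (x 0)) (specNorm B * U / sigmaMin R hR.1)) := by
  set r : ℝ := specNorm B * U / sigmaMin R hR.1 with hr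
  set d : ℝ → Fin n → ℝ :=
    fun t => (J - R).mulVec (x t) + H.mulVec (kron (x t) (x t)) + B.mulVec (u t) with hd
  set g : ℝ → ℝ := fun t => x t ⬝ᵥ x t with hgdef
  -- component derivatives
  have hcomp : ∀ (i : Fin n) (t : ℝ), HasDerivAt (fun t => x t i) (d t i) t := by
    intro i t
    exact ((ContinuousLinearMap.proj (R := ℝ) (φ := fun _ : Fin n => ℝ) i).hasFDerivAt).comp_hasDerivAt t (hx t)
  have hg : ∀ t, HasDerivAt g (2 * (x t ⬝ᵥ d t)) t := by
    intro t
    have hsum : HasDerivAt (fun t => ∑ i, x t i * x t i)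
        (∑ i, (d t i * x t i + x t i * d t i)) t :=
      HasDerivAt.fun_sum fun i _ => (hcomp i t).mul (hcomp i t)
    have heq : (∑ i, (d t i * x t i + x t i * d t i)) = 2 * (x t ⬝ᵥ d t) := by
      rw [dotProduct, Finset.mul_sum]
      exact Finset.sum_congr rfl fun i _ => by ring
    have : g = fun t => ∑ i, x t i * x t i := by
      funext t; rfl
    rw [this, ← heq] at *
    exact hsum
  have hgcont : Continuous g := by
    apply continuous_iff_continuousAt.mpr
    exact fun t => (hg t).continuousAt
  have hderiv : ∀ t, deriv g t = 2 * (x t ⬝ᵥ d t) := fun t => (hg t).deriv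
  have hU0 : 0 ≤ U := le_trans (norm2_nonneg (u 0)) (hU 0)
  rcases Nat.eq_zero_or_pos n with hn | hn
  · -- degenerate case n = 0
    subst hn
    have hz : ∀ v : Fin 0 → ℝ, norm2 v = 0 := by
      intro v; simp [norm2, dotProduct]
    constructor
    · intro t₀ t₁ h0 hlt hs
      have := hs t₀ ⟨le_refl _, hlt.le⟩
      rw [hz] at this
      have hσ0 : sigmaMin R hR.1 = 0 := Real.iInf_of_isEmpty _
      have : r = 0 := by rw [hr, hσ0, div_zero]
      linarith
    · intro t ht
      rw [hz]
      exact le_trans (norm2_nonneg (x 0)) (le_max_left _ _)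
  · -- main case
    have hσ : 0 < sigmaMin R hR.1 := sigmaMin_pos hn R hR
    have hr0 : 0 ≤ r := div_nonneg (mul_nonneg (specNorm_nonneg B) hU0) hσ.le
    -- the key derivative estimate
    have hkey : ∀ s : ℝ, r < norm2 (x s) → deriv g s < 0 := by
      intro s hs
      rw [hderiv s]
      set N := norm2 (x s) with hN
      have hN0 : 0 < N := lt_of_le_of_lt hr0 hs
      have hdot : x s ⬝ᵥ d s ≤ -(sigmaMin R hR.1) * N ^ 2 + specNorm B * U * N := by
        have e1 : x s ⬝ᵥ d s = x s ⬝ᵥ (J.mulVec (x s)) - x s ⬝ᵥ (R.mulVec (x s))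
            + x s ⬝ᵥ H.mulVec (kron (x s) (x s)) + x s ⬝ᵥ B.mulVec (u s) := by
          rw [hd]
          simp only [Matrix.sub_mulVec, dotProduct_add, dotProduct_sub]
        rw [e1, skew_dot J hJ, hEP]
        have e2 : sigmaMin R hR.1 * N ^ 2 ≤ x s ⬝ᵥ R.mulVec (x s) := by
          rw [sq_norm2]
          exact quad_lower R hR.1 (x s)
        have e3 : x s ⬝ᵥ B.mulVec (u s) ≤ specNorm B * U * N := by
          calc x s ⬝ᵥ B.mulVec (u s) ≤ norm2 (x s) * norm2 (B.mulVec (u s)) :=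
                cauchy_dot _ _
            _ ≤ norm2 (x s) * (specNorm B * norm2 (u s)) :=
                mul_le_mul_of_nonneg_left (specNorm_bound B (u s)) (norm2_nonneg _)
            _ ≤ norm2 (x s) * (specNorm B * U) := by
                refine mul_le_mul_of_nonneg_left ?_ (norm2_nonneg _)
                exact mul_le_mul_of_nonneg_left (hU (s)) (specNorm_nonneg B)
            _ = specNorm B * U * N := by rw [hN]; ring
        linarith
      have hBU : specNorm B * U = r * sigmaMin R hR.1 := by
        rw [hr, div_mul_cancel₀ _ hσ.ne']
      have : x s ⬝ᵥ d s ≤ sigmaMin R hR.1 * N * (r - N) := by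
        rw [hBU] at hdot
        nlinarith [hdot]
      have hneg : sigmaMin R hR.1 * N * (r - N) < 0 :=
        mul_neg_of_pos_of_neg (mul_pos hσ hN0) (by linarith)
      linarith
    have hsqrtg : ∀ t, norm2 (x t) = Real.sqrt (g t) := fun t => rfl
    -- Part 1
    have part1 : ∀ t₀ t₁ : ℝ, 0 ≤ t₀ → t₀ < t₁ →
        (∀ s ∈ Set.Icc t₀ t₁, r < norm2 (x s)) → norm2 (x t₁) < norm2 (x t₀) := by
      intro t₀ t₁ h0 hlt hs
      have hanti : StrictAntiOn g (Set.Icc t₀ t₁) := by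
        refine strictAntiOn_of_deriv_neg (convex_Icc t₀ t₁) hgcont.continuousOn ?_
        intro s hsi
        rw [interior_Icc] at hsi
        exact hkey s (hs s ⟨hsi.1.le, hsi.2.le⟩)
      have := hanti ⟨le_refl _, hlt.le⟩ ⟨hlt.le, le_refl _⟩ hlt
      rw [hsqrtg, hsqrtg]
      exact Real.sqrt_lt_sqrt (dot_self_nonneg _) this
    refine ⟨part1, ?_⟩
    -- Part 2
    intro t ht
    rcases eq_or_lt_of_le ht with rfl | htpos
    · exact le_max_left _ _
    by_contra hcon
    push_neg at hcon
    set M : ℝ := max (norm2 (x 0)) r with hM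
    have hM0 : 0 ≤ M := le_trans hr0 (le_max_right _ _)
    have hMr : r ≤ M := le_max_right _ _
    set S : Set ℝ := {s | s ∈ Set.Icc 0 t ∧ g s ≤ M ^ 2} with hS
    have hSclosed : IsClosed S := by
      have : S = Set.Icc 0 t ∩ g ⁻¹' (Set.Iic (M ^ 2)) := rfl
      rw [this]
      exact isClosed_Icc.inter (isClosed_Iic.preimage hgcont)
    have h0S : (0 : ℝ) ∈ S := by
      refine ⟨⟨le_refl _, ht⟩, ?_⟩
      show x 0 ⬝ᵥ x 0 ≤ M ^ 2
      rw [← sq_norm2]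
      exact pow_le_pow_left₀ (norm2_nonneg _) (le_max_left _ _) 2
    have hSbdd : BddAbove S := ⟨t, fun s hsS => hsS.1.2⟩
    set s₀ : ℝ := sSup S with hs₀
    have hs₀S : s₀ ∈ S := hSclosed.csSup_mem ⟨0, h0S⟩ hSbdd
    have hs₀0 : 0 ≤ s₀ := hs₀S.1.1
    have hgt : M ^ 2 < g t := by
      show M ^ 2 < x t ⬝ᵥ x t
      rw [← sq_norm2]
      exact pow_lt_pow_left₀ hcon hM0 (by norm_num)
    have hs₀t : s₀ < t := by
      rcases lt_or_eq_of_le hs₀S.1.2 with h | h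
      · exact h
      · exfalso; rw [h] at hs₀S; linarith [hs₀S.2]
    have hanti : StrictAntiOn g (Set.Icc s₀ t) := by
      refine strictAntiOn_of_deriv_neg (convex_Icc s₀ t) hgcont.continuousOn ?_
      intro s hsi
      rw [interior_Icc] at hsi
      have hsnot : s ∉ S := fun hmem => absurd (le_csSup hSbdd hmem) (not_le.mpr hsi.1)
      have hgs : M ^ 2 < g s := by
        by_contra hle
        push_neg at hle
        exact hsnot ⟨⟨le_trans hs₀0 hsi.1.le, hsi.2.le⟩, hle⟩
      apply hkey
      have : M < norm2 (x s) := by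
        rw [hsqrtg]
        calc M = Real.sqrt (M ^ 2) := (Real.sqrt_sq hM0).symm
          _ < Real.sqrt (g s) := Real.sqrt_lt_sqrt (sq_nonneg _) hgs
      linarith [hMr]
    have := hanti ⟨le_refl _, hs₀t.le⟩ ⟨hs₀t.le, le_refl _⟩ hs₀t
    linarith [hs₀S.2]
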